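/- Let K be a cycle-free Markov kernel on a countable set G having the Liouville property, and let F be the CMT with kernel K (law ℙ_G). Then the connected components of F are indistinguishable by tail branch-properties: for every tail branch-property A ⊆ G × G^G, either Q_G(A) = 0 or Q_G((G × G^G) ∖ A) = 0; equivalently, either ℙ_G-almost surely (v,F) ∈ A for every v ∈ G, or ℙ_G-almost surely (v,F) ∉ A for every v ∈ G. -/

import Mathlib

set_option linter.unusedSectionVars false
set_option linter.unnecessarySimpa false
set_option maxHeartbeats 1000000


open MeasureTheory ENNReal

namespace CMTPaper

variable {G : Type*}

/-- The `n`-step kernel of a Markov kernel `K` on a countable set `G`: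
`K^0(x,·) = δ_x` and `K^{n+1}(x,A) = Σ_y K(x,{y})·K^n(y,A)`. -/
noncomputable def nStep [MeasurableSpace G] (K : G → Measure G) : ℕ → G → Measure G
  | 0 => fun x => Measure.dirac x
  | n + 1 => fun x => Measure.sum fun y => K x {y} • nStep K n y

/-- A kernel is cycle-free if `K^m(x,{x}) = 0` for every `x` and every `m ≥ 1`. -/
def CycleFree [MeasurableSpace G] (K : G → Measure G) : Prop :=
  ∀ x : G, ∀ m : ℕ, 1 ≤ m → nStep K m x {x} = 0

/-- `P` is the law on path space `G^ℕ` of the Markov chain with kernel `K` started at `x`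
(characterized by its finite-dimensional cylinder probabilities). -/
def IsPathLaw [MeasurableSpace G] (K : G → Measure G) (x : G) (P : Measure (ℕ → G)) : Prop :=
  ∀ (n : ℕ) (u : ℕ → G), u 0 = x →
    P {ω | ∀ i ≤ n, ω i = u i} = ∏ i ∈ Finset.range n, K (u i) {u (i + 1)}

/-- The set of collisions of two paths: pairs `(m,n)` with `m,n ≥ 1` and `ω m = ω' n`. -/
def collisions (ω ω' : ℕ → G) : Set (ℕ × ℕ) :=
  {p : ℕ × ℕ | 1 ≤ p.1 ∧ 1 ≤ p.2 ∧ ω p.1 = ω' p.2}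

/-- `μ` is the law on `G^G` of the coalescing Markov trajectories (CMT) with kernel `K`,
i.e. the product measure `⊗_x K(x,·)` (characterized on cylinders). -/
def IsCMTLaw [MeasurableSpace G] (K : G → Measure G) (μ : Measure (G → G)) : Prop :=
  ∀ (s : Finset G) (u : G → G), μ {f | ∀ x ∈ s, f x = u x} = ∏ x ∈ s, K x {u x}

/-- Adjacency in the graph of `f`: an edge between `x` and `f x` for every `x`. -/
def Adj (f : G → G) (a b : G) : Prop := f a = b ∨ f b = a

/-- `a` and `b` lie in the same connected component of the graph of `f`. -/
def SameComponent (f : G → G) (a b : G) : Prop := Relation.ReflTransGen (Adj f) a b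

/-- The connected component of `v` in the graph of `f`. -/
def component (f : G → G) (v : G) : Set G := {u | SameComponent f u v}

/-- The level set of `v`: points whose forward orbit merges with that of `v` after the same
number of steps. -/
def levelSet (f : G → G) (v : G) : Set G := {w | ∃ n : ℕ, f^[n] w = f^[n] v}

/-- The ancestor-line map `π (v, f) = (f^{(n)}(v))_{n ≥ 0}`. -/
def ancLine : G × (G → G) → ℕ → G := fun p n => p.2^[n] p.1

/-- Total-variation distance between two measures on a countable discrete space. -/
noncomputable def tvDist [MeasurableSpace G] (ν₁ ν₂ : Measure G) : ℝ≥0∞ :=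
  ∑' y : G, ((ν₁ {y} - ν₂ {y}) + (ν₂ {y} - ν₁ {y}))

/-- The mass `‖ν₁ ∧ ν₂‖ = Σ_y min(ν₁{y}, ν₂{y})` of the meet of two measures. -/
noncomputable def meetMass [MeasurableSpace G] (ν₁ ν₂ : Measure G) : ℝ≥0∞ :=
  ∑' y : G, min (ν₁ {y}) (ν₂ {y})

/-- The shift on path space, `σ (x_i)_{i≥0} = (x_{i+1})_{i≥0}`. -/
def shift : (ℕ → G) → ℕ → G := fun ω i => ω (i + 1)

/-- An invariant path property: a measurable shift-invariant subset of path space. -/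
def IsInvariantPathProperty [MeasurableSpace G] (A : Set (ℕ → G)) : Prop :=
  MeasurableSet A ∧ shift ⁻¹' A = A

/-- The tail σ-algebra `⋂_n σ((x_i)_{i ≥ n})` on path space. -/
def tailMS (G : Type*) [MeasurableSpace G] : MeasurableSpace (ℕ → G) :=
  ⨅ n : ℕ, MeasurableSpace.comap (fun ω : ℕ → G => fun i => ω (n + i)) inferInstance

/-- A tail path property: a set in the tail σ-algebra of path space. -/
def IsTailPathProperty [MeasurableSpace G] (A : Set (ℕ → G)) : Prop :=
  MeasurableSet[tailMS G] A

/-- A function `h` is `K`-harmonic if `h(x) = Σ_y K(x,{y}) h(y)` for every `x`. -/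
def IsKHarmonic [MeasurableSpace G] (K : G → Measure G) (h : G → ℝ) : Prop :=
  ∀ x : G, h x = ∑' y : G, (K x {y}).toReal * h y

/-- `K` has the Liouville property: every bounded `K`-harmonic function is constant. -/
def LiouvilleProperty [MeasurableSpace G] (K : G → Measure G) : Prop :=
  ∀ h : G → ℝ, (∃ C : ℝ, ∀ x, |h x| ≤ C) → IsKHarmonic K h → ∀ x y : G, h x = h y

/-- Adjacency within a vertex subset `S` of the graph of `f`. -/
def AdjIn (f : G → G) (S : Set G) (a b : G) : Prop := Adj f a b ∧ a ∈ S ∧ b ∈ S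

/-- The connected component of `a` in the subgraph of the graph of `f` induced by `S`. -/
def compIn (f : G → G) (S : Set G) (a : G) : Set G :=
  {b | Relation.ReflTransGen (AdjIn f S) a b}

/-- `B` is a branch of the component of `v`: a connected component of `C_f(v) ∖ U` for some
finite set `U` of vertices. -/
def IsBranch (f : G → G) (v : G) (B : Set G) : Prop :=
  ∃ U : Set G, U.Finite ∧ ∃ a ∈ component f v \ U, B = compIn f (component f v \ U) a

/-- `B` is an ancestral branch of the component of `v`: a branch that eventually contains
the forward orbit of `v`. -/
def IsAncestralBranch (f : G → G) (v : G) (B : Set G) : Prop :=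
  IsBranch f v B ∧ ∃ N : ℕ, ∀ n ≥ N, f^[n] v ∈ B

/-- `f` and `f'` share a common ancestral branch of the component of `v`, on which they
coincide. -/
def SharesAncestralBranch (v : G) (f f' : G → G) : Prop :=
  ∃ B : Set G, IsAncestralBranch f v B ∧ IsAncestralBranch f' v B ∧ Set.EqOn f f' B

/-- A component-property: a measurable subset of `G × G^G` invariant under moving the root
within its connected component. -/
def IsComponentProperty [MeasurableSpace G] (A : Set (G × (G → G))) : Prop :=
  MeasurableSet A ∧
  ∀ (f : G → G) (v v' : G), SameComponent f v v' → ((v, f) ∈ A ↔ (v', f) ∈ A)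

/-- A level-set-property: a measurable subset of `G × G^G` invariant under moving the root
within its level set. -/
def IsLevelSetProperty [MeasurableSpace G] (A : Set (G × (G → G))) : Prop :=
  MeasurableSet A ∧
  ∀ (f : G → G) (v v' : G), v' ∈ levelSet f v → ((v, f) ∈ A ↔ (v', f) ∈ A)

/-- A tail branch-property: a component-property insensitive to finite modifications that
preserve a common ancestral branch. -/
def IsTailBranchProperty [MeasurableSpace G] (A : Set (G × (G → G))) : Prop :=
  IsComponentProperty A ∧
  ∀ (v : G) (f f' : G → G), {x | f x ≠ f' x}.Finite → SharesAncestralBranch v f f' →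
    ((v, f) ∈ A ↔ (v, f') ∈ A)

/-- A tail level-set-property: a level-set-property insensitive to finite modifications that
modify the level set of the root at only finitely many points. -/
def IsTailLevelSetProperty [MeasurableSpace G] (A : Set (G × (G → G))) : Prop :=
  IsLevelSetProperty A ∧
  ∀ (v : G) (f f' : G → G), {x | f x ≠ f' x}.Finite →
    (symmDiff (levelSet f v) (levelSet f' v)).Finite →
    ((v, f) ∈ A ↔ (v, f') ∈ A)



/-! ### Generic cylinder machinery -/

section Cyl

variable {ι : Type*} {G : Type*} [Countable ι] [Countable G]
  [MeasurableSpace G] [MeasurableSingletonClass G]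

/-- A finite cylinder set in a countable product. -/
def SCyl (t : Finset ι) (w : ι → G) : Set (ι → G) := {f | ∀ x ∈ t, f x = w x}

lemma measurableSet_SCyl (t : Finset ι) (w : ι → G) : MeasurableSet (SCyl t w) := by
  have h : SCyl t w = ⋂ x ∈ t, (fun f : ι → G => f x) ⁻¹' {w x} := by
    ext f; simp [SCyl]
  rw [h]
  exact MeasurableSet.biInter t.countable_toSet
    (fun x _ => measurable_pi_apply x (measurableSet_singleton (w x)))

lemma generateFrom_SCyl :
    MeasurableSpace.generateFrom {S : Set (ι → G) | ∃ t w, S = SCyl t w}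
      = MeasurableSpace.pi := by
  apply le_antisymm
  · rw [MeasurableSpace.generateFrom_le_iff]
    rintro S ⟨t, w, rfl⟩
    exact measurableSet_SCyl t w
  · show (⨆ x : ι, MeasurableSpace.comap (fun f : ι → G => f x) inferInstance) ≤ _
    refine iSup_le fun x => ?_
    rw [MeasurableSpace.comap_le_iff_le_map]
    intro S _
    show MeasurableSet[MeasurableSpace.generateFrom _] ((fun f : ι → G => f x) ⁻¹' S)
    have h : (fun f : ι → G => f x) ⁻¹' S = ⋃ g ∈ S, SCyl {x} (fun _ => g) := by
      ext f; simp [SCyl]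
    rw [h]
    exact MeasurableSet.biUnion S.to_countable
      (fun g _ => MeasurableSpace.measurableSet_generateFrom ⟨{x}, fun _ => g, rfl⟩)

lemma isPiSystem_SCyl : IsPiSystem {S : Set (ι → G) | ∃ t w, S = SCyl t w} := by
  classical
  rintro S ⟨t₁, w₁, rfl⟩ S' ⟨t₂, w₂, rfl⟩ ⟨f₀, hf₁, hf₂⟩
  refine ⟨t₁ ∪ t₂, f₀, ?_⟩
  ext g
  constructor
  · rintro ⟨hg₁, hg₂⟩ x hx
    rcases Finset.mem_union.mp hx with h | h
    · rw [hg₁ x h, hf₁ x h]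
    · rw [hg₂ x h, hf₂ x h]
  · intro hg
    constructor
    · intro x hx; rw [hg x (Finset.mem_union_left _ hx), ← hf₁ x hx]
    · intro x hx; rw [hg x (Finset.mem_union_right _ hx), ← hf₂ x hx]

/-- Two finite measures agreeing on all cylinders and on `univ` are equal. -/
lemma ext_SCyl {μ ν : Measure (ι → G)} [IsFiniteMeasure μ] [IsFiniteMeasure ν]
    (h : ∀ t w, μ (SCyl t w) = ν (SCyl t w)) (huniv : μ Set.univ = ν Set.univ) :
    μ = ν := by
  refine ext_of_generate_finite _ generateFrom_SCyl.symm isPiSystem_SCyl ?_ huniv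
  rintro S ⟨t, w, rfl⟩
  exact h t w

end Cyl

section Meas

variable {G : Type*} [Countable G] [MeasurableSpace G] [MeasurableSingletonClass G]

lemma measurableSet_all (S : Set G) : MeasurableSet S := S.to_countable.measurableSet

lemma measurable_apply_comp {α : Type*} [MeasurableSpace α] {g : α → G}
    {h : α → (G → G)} (hg : Measurable g) (hh : Measurable h) :
    Measurable (fun a => h a (g a)) := by
  apply measurable_to_countable'
  intro z
  have : (fun a => h a (g a)) ⁻¹' {z} = ⋃ x : G, (g ⁻¹' {x}) ∩ ((fun a => h a x) ⁻¹' {z}) := by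
    ext a
    simp only [Set.mem_preimage, Set.mem_singleton_iff, Set.mem_iUnion, Set.mem_inter_iff]
    constructor
    · intro hz; exact ⟨g a, rfl, hz⟩
    · rintro ⟨x, hx, hz⟩; rw [← hx] at hz; exact hz
  rw [this]
  exact MeasurableSet.iUnion fun x =>
    (hg (measurableSet_singleton x)).inter
      ((measurable_pi_apply x).comp hh (measurableSet_singleton z))

lemma measurable_iterate (y : G) (n : ℕ) : Measurable (fun f : G → G => f^[n] y) := by
  induction n with
  | zero => simpa using measurable_const
  | succ n ih =>
      have : (fun f : G → G => f^[n+1] y) = fun f => f (f^[n] y) := by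
        funext f; rw [Function.iterate_succ_apply']
      rw [this]
      exact measurable_apply_comp ih measurable_id

/-- The ancestral line map as a function of `f`, for fixed root. -/
def lineMap (y : G) : (G → G) → (ℕ → G) := fun f k => f^[k] y

lemma measurable_lineMap (y : G) : Measurable (lineMap y) :=
  measurable_pi_lambda _ fun k => measurable_iterate y k

end Meas


section Graph

variable {G : Type*}

lemma adj_symm {f : G → G} {a b : G} (h : Adj f a b) : Adj f b a := Or.symm h

lemma sameComponent_symm {f : G → G} {a b : G} (h : SameComponent f a b) :
    SameComponent f b a := by
  induction h with
  | refl => exact Relation.ReflTransGen.refl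
  | tail _ hbc ih => exact Relation.ReflTransGen.head (adj_symm hbc) ih

lemma orbit_sameComponent (f : G → G) (y : G) (n : ℕ) : SameComponent f y (f^[n] y) := by
  induction n with
  | zero => exact Relation.ReflTransGen.refl
  | succ n ih => exact ih.tail (Or.inl (Function.iterate_succ_apply' f n y).symm)

lemma orbit_eq_of_agree {S : Set G} {f f' : G → G} (hagree : ∀ x ∉ S, f x = f' x)
    {y : G} (horb : ∀ n, f^[n] y ∉ S) : ∀ n, f^[n] y = f'^[n] y := by
  intro n
  induction n with
  | zero => rfl
  | succ n ih =>
      rw [Function.iterate_succ_apply', Function.iterate_succ_apply', ← ih,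
        hagree _ (horb n)]

/-- **Key deterministic lemma.** A tail branch-property is insensitive to modifying `f`
on a finite set `S` avoided by the orbit of the root `y`. -/
lemma tailBranch_insensitive [MeasurableSpace G] {A : Set (G × (G → G))}
    (hA : IsTailBranchProperty A) {S : Set G} (hS : S.Finite) {y : G} (hy : y ∉ S)
    {f f' : G → G} (hagree : ∀ x ∉ S, f x = f' x) (horb : ∀ n, f^[n] y ∉ S) :
    ((y, f) ∈ A ↔ (y, f') ∈ A) := by
  have horb' : ∀ n, f'^[n] y ∉ S := fun n => (orbit_eq_of_agree hagree horb n) ▸ horb n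
  have hagree' : ∀ x ∉ S, f' x = f x := fun x hx => (hagree x hx).symm
  have key : ∀ (g g' : G → G), (∀ x ∉ S, g x = g' x) →
      ∀ b, Relation.ReflTransGen (AdjIn g (component g y \ S)) y b →
        Relation.ReflTransGen (AdjIn g' (component g' y \ S)) y b := by
    intro g g' hgg b hb
    induction hb with
    | refl => exact Relation.ReflTransGen.refl
    | tail hyb hbc ih =>
        rename_i b' c
        obtain ⟨hadj, ⟨hbcomp, hbS⟩, ⟨hccomp, hcS⟩⟩ := hbc
        have hadj' : Adj g' b' c := by
          rcases hadj with h | h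
          · exact Or.inl (by rw [← hgg b' hbS]; exact h)
          · exact Or.inr (by rw [← hgg c hcS]; exact h)
        have hbcomp' : b' ∈ component g' y :=
          sameComponent_symm (Relation.ReflTransGen.mono (r := AdjIn g' (component g' y \ S)) (fun u v huv => huv.1) _ _ ih)
        have hccomp' : c ∈ component g' y :=
          Relation.ReflTransGen.head (adj_symm hadj') hbcomp'
        exact ih.tail ⟨hadj', ⟨hbcomp', hbS⟩, ⟨hccomp', hcS⟩⟩
  have hBeq : compIn f (component f y \ S) y = compIn f' (component f' y \ S) y :=
    Set.Subset.antisymm (fun b hb => key f f' hagree b hb) (fun b hb => key f' f hagree' b hb)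
  have hBnotS : ∀ b, b ∈ compIn f (component f y \ S) y → b ∉ S := by
    intro b hb
    induction hb with
    | refl => exact hy
    | tail _ hbc _ => exact hbc.2.2.2
  have horbB : ∀ n, f^[n] y ∈ compIn f (component f y \ S) y := by
    intro n
    induction n with
    | zero => exact Relation.ReflTransGen.refl
    | succ n ih =>
        refine ih.tail ⟨Or.inl (Function.iterate_succ_apply' f n y).symm, ?_, ?_⟩
        · exact ⟨sameComponent_symm (orbit_sameComponent f y n), horb n⟩
        · exact ⟨sameComponent_symm (orbit_sameComponent f y (n + 1)), horb (n + 1)⟩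
  have hanc : IsAncestralBranch f y (compIn f (component f y \ S) y) :=
    ⟨⟨S, hS, y, ⟨⟨Relation.ReflTransGen.refl, hy⟩, rfl⟩⟩, 0, fun n _ => horbB n⟩
  have hanc' : IsAncestralBranch f' y (compIn f (component f y \ S) y) := by
    refine ⟨⟨S, hS, y, ⟨⟨Relation.ReflTransGen.refl, hy⟩, hBeq⟩⟩, 0, fun n _ => ?_⟩
    rw [← orbit_eq_of_agree hagree horb n]
    exact horbB n
  have heqon : Set.EqOn f f' (compIn f (component f y \ S) y) :=
    fun b hb => hagree b (hBnotS b hb)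
  have hfin : {x | f x ≠ f' x}.Finite :=
    hS.subset (fun x hx => by_contra fun h => hx (hagree x h))
  exact hA.2 y f f' hfin ⟨_, hanc, hanc', heqon⟩

end Graph

section Part2


variable {G : Type*} [Countable G] [MeasurableSpace G] [MeasurableSingletonClass G]
variable {K : G → Measure G} {μ : Measure (G → G)}

lemma nStep_succ_apply (K : G → Measure G) (n : ℕ) (x z : G) :
    nStep K (n + 1) x {z} = ∑' y, K x {y} * nStep K n y {z} := by
  show (Measure.sum fun y => K x {y} • nStep K n y) {z} = _
  rw [Measure.sum_apply _ (measurableSet_singleton z)]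
  simp [Measure.smul_apply, smul_eq_mul]

lemma nStep_one (K : G → Measure G) (x z : G) : nStep K 1 x {z} = K x {z} := by
  rw [nStep_succ_apply]
  rw [show (∑' y, K x {y} * nStep K 0 y {z}) = ∑' y, K x {y} * Measure.dirac y {z} from rfl]
  rw [tsum_eq_single z]
  · simp [Measure.dirac_apply_of_mem]
  · intro y hy
    have : Measure.dirac y {z} = 0 := by
      rw [Measure.dirac_apply' _ (measurableSet_singleton z)]
      simp [Set.indicator, hy]
    simp [this]

lemma prod_path_le_nStep (K : G → Measure G) (m : ℕ) (e : ℕ → G) :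
    (∏ i ∈ Finset.range m, K (e i) {e (i + 1)}) ≤ nStep K m (e 0) {e m} := by
  induction m generalizing e with
  | zero =>
      simp [nStep, Measure.dirac_apply_of_mem (Set.mem_singleton (e 0))]
  | succ n ih =>
      rw [nStep_succ_apply, Finset.prod_range_succ']
      calc (∏ i ∈ Finset.range n, K (e (i + 1)) {e (i + 1 + 1)}) * K (e 0) {e 1}
          ≤ nStep K n (e 1) {e (n + 1)} * K (e 0) {e 1} := by
            exact mul_le_mul_left (ih (fun i => e (i + 1))) _
        _ = K (e 0) {e 1} * nStep K n (e 1) {e (n + 1)} := mul_comm _ _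
        _ ≤ ∑' y, K (e 0) {y} * nStep K n y {e (n + 1)} := ENNReal.le_tsum (e 1)

/-- Path cylinder event: `f` maps `e k` to `e (k+1)` for all `k < T`. -/
def PathCyl (T : ℕ) (e : ℕ → G) : Set (G → G) := {f | ∀ k < T, f (e k) = e (k + 1)}

open Classical in
/-- The canonical successor function of a finite path. -/
noncomputable def extFun (T : ℕ) (e : ℕ → G) : G → G := fun x =>
  if h : ∃ k, k < T ∧ e k = x then e (h.choose + 1) else x

lemma extFun_eq {T : ℕ} {e : ℕ → G} (hinj : ∀ i < T, ∀ j < T, e i = e j → i = j)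
    {k : ℕ} (hk : k < T) : extFun T e (e k) = e (k + 1) := by
  classical
  have h : ∃ k', k' < T ∧ e k' = e k := ⟨k, hk, rfl⟩
  rw [extFun]
  rw [dif_pos h]
  have hs := h.choose_spec
  have : h.choose = k := hinj _ hs.1 _ hk hs.2
  rw [this]

lemma PathCyl_eq_SCyl [DecidableEq G] {T : ℕ} {e : ℕ → G}
    (hinj : ∀ i < T, ∀ j < T, e i = e j → i = j) :
    PathCyl T e = SCyl ((Finset.range T).image e) (extFun T e) := by
  ext f
  constructor
  · intro hf x hx
    obtain ⟨k, hk, rfl⟩ := Finset.mem_image.mp hx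
    rw [Finset.mem_range] at hk
    rw [extFun_eq hinj hk]
    exact hf k hk
  · intro hf k hk
    have := hf (e k) (Finset.mem_image.mpr ⟨k, Finset.mem_range.mpr hk, rfl⟩)
    rwa [extFun_eq hinj hk] at this

lemma measurableSet_PathCyl (T : ℕ) (e : ℕ → G) : MeasurableSet (PathCyl T e) := by
  have : PathCyl T e = ⋂ k ∈ Finset.range T, (fun f : G → G => f (e k)) ⁻¹' {e (k + 1)} := by
    ext f; simp [PathCyl]
  rw [this]
  exact MeasurableSet.biInter (Finset.range T).countable_toSet
    (fun k _ => measurable_pi_apply _ (measurableSet_singleton _))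

lemma μ_PathCyl (hμ : IsCMTLaw K μ) {T : ℕ} {e : ℕ → G}
    (hinj : ∀ i < T, ∀ j < T, e i = e j → i = j) :
    μ (PathCyl T e) = ∏ k ∈ Finset.range T, K (e k) {e (k + 1)} := by
  classical
  rw [PathCyl_eq_SCyl hinj]
  rw [show (SCyl ((Finset.range T).image e) (extFun T e) : Set (G → G))
      = {f | ∀ x ∈ (Finset.range T).image e, f x = extFun T e x} from rfl]
  rw [hμ]
  rw [Finset.prod_image]
  · apply Finset.prod_congr rfl
    intro k hk
    rw [extFun_eq hinj (Finset.mem_range.mp hk)]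
  · intro i hi j hj hij
    exact hinj i (Finset.mem_range.mp hi) j (Finset.mem_range.mp hj) hij

/-- Return to `z` in at least one step is `μ`-null under cycle-freeness. -/
lemma ret_null (hμ : IsCMTLaw K μ) (hcf : CycleFree K) (z : G) :
    μ {f : G → G | ∃ m, 1 ≤ m ∧ f^[m] z = z} = 0 := by
  classical
  -- cover by injective cycles through z
  set Bad := {f : G → G | ∃ m, 1 ≤ m ∧ f^[m] z = z} with hBad
  have hcover : Bad ⊆ ⋃ (d : ℕ) (e : {e : Fin (d + 1) → G //
      Function.Injective e ∧ e 0 = z}), PathCyl (d + 1) (fun k => (e : Fin (d+1) → G) ⟨k % (d + 1), Nat.mod_lt _ (Nat.succ_pos d)⟩) := by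
    rintro f ⟨m, hm, hfm⟩
    have hex : ∃ k, 1 ≤ k ∧ f^[k] z = z := ⟨m, hm, hfm⟩
    have hP : ∃ k, (fun k => 1 ≤ k ∧ f^[k] z = z) k := hex
    set d' := Nat.find hP with hd'def
    obtain ⟨hd'1, hd'z⟩ := Nat.find_spec hP
    rw [← hd'def] at hd'z
    -- d' ≥ 1, f^[d'] z = z, and z, f z, ..., f^[d'-1] z injective
    have hinj : ∀ i < d', ∀ j < d', f^[i] z = f^[j] z → i = j := by
      intro i hi j hj hij
      by_contra hne
      wlog hlt : i < j generalizing i j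
      · exact this j hj i hi hij.symm (Ne.symm hne) (by omega)
      -- then f^[d' - (j - i)] z = z with 1 ≤ d' - (j-i) < d'
      have hstep : f^[d' - j + i] z = z := by
        have h1 : f^[d' - j] (f^[j] z) = z := by
          rw [← Function.iterate_add_apply, show d' - j + j = d' from by omega]
          exact hd'z
        rw [← hij] at h1
        rw [Function.iterate_add_apply]
        exact h1
      have hlt2 : d' - j + i < d' := by omega
      have hge : 1 ≤ d' - j + i := by omega
      exact Nat.find_min hP hlt2 ⟨hge, hstep⟩
    obtain ⟨d, hd⟩ : ∃ d, d' = d + 1 := ⟨d' - 1, by omega⟩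
    rw [hd] at hd'z hinj
    refine Set.mem_iUnion.mpr ⟨d, Set.mem_iUnion.mpr ⟨⟨fun k => f^[(k : ℕ)] z, ?_, ?_⟩, ?_⟩⟩
    · intro i j hij
      exact Fin.ext (hinj i i.isLt j j.isLt hij)
    · rfl
    · intro k hk
      show f (f^[k % (d+1)] z) = f^[(k+1) % (d+1)] z
      rcases Nat.lt_or_ge (k + 1) (d + 1) with h | h
      · rw [Nat.mod_eq_of_lt (by omega), Nat.mod_eq_of_lt h]
        exact (Function.iterate_succ_apply' f k z).symm
      · have hk1 : k + 1 = d + 1 := by omega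
        rw [Nat.mod_eq_of_lt (by omega), hk1, Nat.mod_self]
        have h2 : f (f^[k] z) = f^[k + 1] z := (Function.iterate_succ_apply' f k z).symm
        rw [h2, hk1]
        simpa using hd'z
  refine measure_mono_null hcover ?_
  refine measure_iUnion_null fun d => measure_iUnion_null fun e => ?_
  obtain ⟨e, he_inj, he0⟩ := e
  set ee : ℕ → G := fun k => e ⟨k % (d + 1), Nat.mod_lt _ (Nat.succ_pos d)⟩ with hee
  have hinj : ∀ i < d + 1, ∀ j < d + 1, ee i = ee j → i = j := by
    intro i hi j hj hij
    have : (⟨i % (d+1), Nat.mod_lt _ (Nat.succ_pos d)⟩ : Fin (d+1))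
        = ⟨j % (d+1), Nat.mod_lt _ (Nat.succ_pos d)⟩ := he_inj hij
    have := Fin.mk.injEq _ _ _ _ ▸ this
    simpa [Nat.mod_eq_of_lt hi, Nat.mod_eq_of_lt hj] using this
  rw [μ_PathCyl hμ hinj]
  have hle := prod_path_le_nStep K (d + 1) ee
  have h0 : ee 0 = z := by simpa [hee] using he0
  have hT : ee (d + 1) = z := by
    have : (d + 1) % (d + 1) = 0 := Nat.mod_self _
    simp only [hee, this]
    simpa using he0
  rw [h0, hT] at hle
  rw [hcf z (d + 1) (by omega)] at hle
  exact le_antisymm hle zero_le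

/-- Almost surely, the orbit of `z` is injective. -/
lemma noninj_null (hμ : IsCMTLaw K μ) (hcf : CycleFree K) (z : G) :
    μ {f : G → G | ∃ i j, i < j ∧ f^[i] z = f^[j] z} = 0 := by
  have hcover : {f : G → G | ∃ i j, i < j ∧ f^[i] z = f^[j] z}
      ⊆ ⋃ x : G, {f : G → G | ∃ m, 1 ≤ m ∧ f^[m] x = x} := by
    rintro f ⟨i, j, hij, hfij⟩
    refine Set.mem_iUnion.mpr ⟨f^[i] z, j - i, by omega, ?_⟩
    rw [← Function.iterate_add_apply, show j - i + i = j from by omega]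
    exact hfij.symm
  exact measure_mono_null hcover (measure_iUnion_null fun x => ret_null hμ hcf x)

/-- If there is a `K`-positive path from `x` to `z` (`x ≠ z`), then under cycle-freeness
the orbit of `z` almost surely never hits `x`. -/
lemma hits_null (hμ : IsCMTLaw K μ) (hcf : CycleFree K) {x z : G} (hxz : x ≠ z)
    {d : ℕ} {p : ℕ → G} (hp0 : p 0 = x) (hpd : p d = z)
    (hpos : ∀ i < d, K (p i) {p (i + 1)} ≠ 0) :
    μ {f : G → G | ∃ m, f^[m] z = x} = 0 := by
  classical
  have hcover : {f : G → G | ∃ m, f^[m] z = x}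
      ⊆ {f : G → G | ∃ i j, i < j ∧ f^[i] z = f^[j] z}
        ∪ ⋃ (m : ℕ) (e : {e : Fin (m + 2) → G //
            Function.Injective e ∧ e 0 = z ∧ e (Fin.last (m + 1)) = x}),
          PathCyl (m + 1) (fun k => if h : k < m + 2 then (e : Fin (m+2) → G) ⟨k, h⟩ else x) := by
    rintro f ⟨m, hfm⟩
    by_cases hinj : ∃ i j, i < j ∧ f^[i] z = f^[j] z
    · exact Or.inl hinj
    push_neg at hinj
    right
    -- first hitting time
    have hex : ∃ k, f^[k] z = x := ⟨m, hfm⟩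
    set t := Nat.find hex with ht
    have hts : f^[t] z = x := Nat.find_spec hex
    have ht1 : 1 ≤ t := by
      rcases Nat.eq_zero_or_pos t with h0 | h; · exfalso; apply hxz; rw [← hts, h0]; rfl
      exact h
    obtain ⟨m', hm'⟩ : ∃ m', t = m' + 1 := ⟨t - 1, by omega⟩
    refine Set.mem_iUnion.mpr ⟨m', Set.mem_iUnion.mpr ⟨⟨fun k => f^[(k : ℕ)] z, ?_, rfl, ?_⟩, ?_⟩⟩
    · intro i j hij
      by_contra hne
      rcases Nat.lt_or_ge (i : ℕ) (j : ℕ) with h | h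
      · exact absurd hij (hinj i j h ∘ fun h => h)
      · have : (j : ℕ) < (i : ℕ) := by
          rcases Nat.lt_or_ge (j : ℕ) (i : ℕ) with h' | h'; · exact h'
          exact absurd (Fin.ext (le_antisymm h' h)) hne
        exact absurd hij.symm (hinj j i this ∘ fun h => h)
    · show f^[m' + 1] z = x
      rw [← hm']; exact hts
    · intro k hk
      have hk2 : k < m' + 2 := by omega
      have hk12 : k + 1 < m' + 2 := by omega
      simp only [dif_pos hk2, dif_pos hk12]
      exact (Function.iterate_succ_apply' f k z).symm
  refine measure_mono_null hcover (measure_union_null (noninj_null hμ hcf z) ?_)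
  refine measure_iUnion_null fun m => measure_iUnion_null fun e => ?_
  obtain ⟨e, he_inj, he0, hel⟩ := e
  set ee : ℕ → G := fun k => if h : k < m + 2 then e ⟨k, h⟩ else x with hee
  have hinj : ∀ i < m + 1, ∀ j < m + 1, ee i = ee j → i = j := by
    intro i hi j hj hij
    have hi2 : i < m + 2 := by omega
    have hj2 : j < m + 2 := by omega
    simp only [hee, dif_pos hi2, dif_pos hj2] at hij
    exact congrArg Fin.val (he_inj hij)
  rw [μ_PathCyl hμ hinj]
  -- concatenate p (x to z, d steps) with ee (z to x, m+1 steps)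
  set c : ℕ → G := fun i => if i ≤ d then p i else ee (i - d) with hc
  have hc0 : c 0 = x := by simp [hc, hp0]
  have hcend : c (d + (m + 1)) = x := by
    rcases Nat.eq_zero_or_pos (m + 1) with h | h
    · omega
    have : ¬ (d + (m + 1) ≤ d) := by omega
    simp only [hc, if_neg this]
    have : d + (m + 1) - d = m + 1 := by omega
    rw [this]
    show ee (m + 1) = x
    simp only [hee, dif_pos (by omega : m + 1 < m + 2)]
    exact hel
  have hle := prod_path_le_nStep K (d + (m + 1)) c
  rw [hc0, hcend, hcf x (d + (m + 1)) (by omega)] at hle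
  have hsplit : (∏ i ∈ Finset.range (d + (m + 1)), K (c i) {c (i + 1)})
      = (∏ i ∈ Finset.range d, K (p i) {p (i + 1)})
        * ∏ i ∈ Finset.range (m + 1), K (ee i) {ee (i + 1)} := by
    rw [Finset.prod_range_add]
    congr 1
    · apply Finset.prod_congr rfl
      intro i hi
      have hi' := Finset.mem_range.mp hi
      have h1 : c i = p i := by simp [hc, if_pos (by omega : i ≤ d)]
      have h2 : c (i + 1) = p (i + 1) := by simp [hc, if_pos (by omega : i + 1 ≤ d)]
      rw [h1, h2]
    · apply Finset.prod_congr rfl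
      intro i hi
      have hi' := Finset.mem_range.mp hi
      have h1 : c (d + i) = ee i := by
        rcases Nat.eq_zero_or_pos i with h0 | h
        · subst h0
          simp only [hc, if_pos (le_refl d), Nat.add_zero]
          show p d = ee 0
          simp only [hee, dif_pos (by omega : 0 < m + 2), Fin.mk_zero]
          rw [hpd, he0]
        · have : ¬ (d + i ≤ d) := by omega
          simp only [hc, if_neg this]
          congr 1
          omega
      have h2 : c (d + i + 1) = ee (i + 1) := by
        have : ¬ (d + i + 1 ≤ d) := by omega
        simp only [hc, if_neg this]
        congr 1
        omega
      rw [h1, h2]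
  rw [hsplit] at hle
  have hne : (∏ i ∈ Finset.range d, K (p i) {p (i + 1)}) ≠ 0 := by
    rw [Finset.prod_ne_zero_iff]
    intro i hi
    exact hpos i (Finset.mem_range.mp hi)
  have := nonpos_iff_eq_zero.mp hle
  rcases mul_eq_zero.mp this with h | h
  · exact absurd h hne
  · exact h

open Classical in
/-- Resampling the coordinates in `S` from an independent copy. -/
noncomputable def resample (S : Set G) (p : (G → G) × (G → G)) : G → G :=
  fun x => if x ∈ S then p.2 x else p.1 x

lemma measurable_resample (S : Set G) : Measurable (resample (G := G) S) := by
  classical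
  apply measurable_pi_lambda
  intro x
  by_cases hx : x ∈ S
  · simp only [resample, if_pos hx]
    exact (measurable_pi_apply x).comp measurable_snd
  · simp only [resample, if_neg hx]
    exact (measurable_pi_apply x).comp measurable_fst

lemma SCyl_def (t : Finset G) (w : G → G) :
    (SCyl t w : Set (G → G)) = {f | ∀ x ∈ t, f x = w x} := rfl

lemma μ_SCyl (hμ : IsCMTLaw K μ) (t : Finset G) (w : G → G) :
    μ (SCyl t w) = ∏ x ∈ t, K x {w x} := hμ t w

lemma map_resample (hμ : IsCMTLaw K μ) [IsProbabilityMeasure μ] (S : Set G) :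
    Measure.map (resample S) (μ.prod μ) = μ := by
  classical
  have hmeas := measurable_resample (G := G) S
  haveI : IsProbabilityMeasure (Measure.map (resample S) (μ.prod μ)) :=
    Measure.isProbabilityMeasure_map hmeas.aemeasurable
  apply ext_SCyl
  · intro t w
    rw [Measure.map_apply hmeas (measurableSet_SCyl t w)]
    have hpre : resample S ⁻¹' (SCyl t w)
        = (SCyl (t.filter (fun x => x ∉ S)) w) ×ˢ (SCyl (t.filter (· ∈ S)) w) := by
      ext p
      simp only [Set.mem_preimage, SCyl, Set.mem_setOf_eq, Set.mem_prod, Finset.mem_filter]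
      constructor
      · intro h
        constructor
        · rintro x ⟨hx, hxS⟩
          have := h x hx
          rwa [resample, if_neg hxS] at this
        · rintro x ⟨hx, hxS⟩
          have := h x hx
          rwa [resample, if_pos hxS] at this
      · rintro ⟨h1, h2⟩ x hx
        by_cases hxS : x ∈ S
        · show (if x ∈ S then p.2 x else p.1 x) = w x
          rw [if_pos hxS]; exact h2 x ⟨hx, hxS⟩
        · show (if x ∈ S then p.2 x else p.1 x) = w x
          rw [if_neg hxS]; exact h1 x ⟨hx, hxS⟩
    rw [hpre, Measure.prod_prod, μ_SCyl hμ, μ_SCyl hμ, μ_SCyl hμ]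
    rw [mul_comm]
    simpa using Finset.prod_filter_mul_prod_filter_not t (· ∈ S) (fun x => K x {w x})
  · simp [measure_univ, Measure.map_apply hmeas MeasurableSet.univ]

/-- `D` does not depend on the coordinates in `S`. -/
def Insensitive (S : Set G) (D : Set (G → G)) : Prop :=
  ∀ f g : G → G, (∀ x, x ∉ S → f x = g x) → (f ∈ D ↔ g ∈ D)

/-- Independence: an `S`-insensitive event is independent of any cylinder on coordinates
inside `S`. -/
lemma indep_of_insensitive (hμ : IsCMTLaw K μ) [IsProbabilityMeasure μ]
    {S : Set G} {D : Set (G → G)} (hD : MeasurableSet D) (hins : Insensitive S D)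
    {t : Finset G} (ht : ↑t ⊆ S) (w : G → G) :
    μ (D ∩ SCyl t w) = μ D * μ (SCyl t w) := by
  classical
  have hagree : ∀ p : (G → G) × (G → G), ∀ x, x ∉ S → p.1 x = resample S p x := by
    intro p x hx
    rw [resample, if_neg hx]
  conv_lhs => rw [← map_resample hμ S]
  rw [Measure.map_apply (measurable_resample S) ((hD.inter (measurableSet_SCyl t w)))]
  have hpre : resample S ⁻¹' (D ∩ SCyl t w) = D ×ˢ (SCyl t w) := by
    ext p
    simp only [Set.mem_preimage, Set.mem_inter_iff, Set.mem_prod]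
    constructor
    · rintro ⟨hD', hC⟩
      refine ⟨(hins p.1 (resample S p) (hagree p)).mpr hD', ?_⟩
      intro x hx
      have := hC x hx
      rwa [resample, if_pos (ht (Finset.mem_coe.mpr hx))] at this
    · rintro ⟨hD', hC⟩
      refine ⟨(hins p.1 (resample S p) (hagree p)).mp hD', ?_⟩
      intro x hx
      show (if x ∈ S then p.2 x else p.1 x) = w x
      rw [if_pos (ht (Finset.mem_coe.mpr hx))]
      exact hC x hx
  rw [hpre, Measure.prod_prod]

/-- The section of `A` at root `x`. -/
def sec (A : Set (G × (G → G))) (x : G) : Set (G → G) := {f | (x, f) ∈ A}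

lemma measurableSet_sec {A : Set (G × (G → G))} (hA : MeasurableSet A) (x : G) :
    MeasurableSet (sec A x) := measurable_prodMk_left hA

lemma measure_inter_compl_null {α : Type*} [MeasurableSpace α] {ν : Measure α}
    {O X : Set α} (hO : ν Oᶜ = 0) : ν (X ∩ O) = ν X := by
  apply le_antisymm (measure_mono Set.inter_subset_left)
  calc ν X ≤ ν ((X ∩ O) ∪ Oᶜ) := measure_mono (fun a ha => by
        by_cases h : a ∈ O
        · exact Or.inl ⟨ha, h⟩
        · exact Or.inr h)
    _ ≤ ν (X ∩ O) + ν Oᶜ := measure_union_le _ _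
    _ = ν (X ∩ O) := by rw [hO, add_zero]

/-- The event that the orbit of `z` avoids `S`. -/
def Avoid (S : Set G) (z : G) : Set (G → G) := {f | ∀ n, f^[n] z ∉ S}

lemma measurableSet_Avoid (S : Set G) (z : G) : MeasurableSet (Avoid S z) := by
  have h : Avoid S z = ⋂ n, (fun f : G → G => f^[n] z) ⁻¹' Sᶜ := by
    ext f; simp [Avoid]
  rw [h]
  exact MeasurableSet.iInter fun n => measurable_iterate z n (measurableSet_all Sᶜ)

lemma insensitive_avoid (S : Set G) (z : G) : Insensitive S (Avoid S z) := by
  intro f g hagree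
  constructor
  · intro h2 n
    rw [← orbit_eq_of_agree hagree h2 n]
    exact h2 n
  · intro h2 n
    have hagree' : ∀ x ∉ S, g x = f x := fun x hx => (hagree x hx).symm
    rw [← orbit_eq_of_agree hagree' h2 n]
    exact h2 n

lemma insensitive_sec_avoid {A : Set (G × (G → G))} (hA : IsTailBranchProperty A)
    {S : Set G} (hS : S.Finite) {z : G} (hz : z ∉ S) :
    Insensitive S (sec A z ∩ Avoid S z) := by
  intro f g hagree
  constructor
  · rintro ⟨h1, h2⟩
    exact ⟨(tailBranch_insensitive hA hS hz hagree h2).mp h1,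
      (insensitive_avoid S z f g hagree).mp h2⟩
  · rintro ⟨h1, h2⟩
    have h2f : f ∈ Avoid S z := (insensitive_avoid S z f g hagree).mpr h2
    exact ⟨(tailBranch_insensitive hA hS hz hagree h2f).mpr h1, h2f⟩

lemma pathCyl_sameComponent {T : ℕ} {e : ℕ → G} {f : G → G} (hf : f ∈ PathCyl T e) :
    SameComponent f (e 0) (e T) := by
  induction T with
  | zero => exact Relation.ReflTransGen.refl
  | succ n ih =>
      exact (ih (fun k hk => hf k (by omega))).tail (Or.inl (hf n (by omega)))

lemma K_self_eq_zero (hcf : CycleFree K) (x : G) : K x {x} = 0 := by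
  have := hcf x 1 le_rfl
  rwa [nStep_one] at this

/-- Harmonicity of `x ↦ μ(A_x)`. -/
lemma sec_harmonic (hcf : CycleFree K) (hμ : IsCMTLaw K μ) [IsProbabilityMeasure μ]
    {A : Set (G × (G → G))} (hA : IsTailBranchProperty A) (x : G) :
    μ (sec A x) = ∑' y, K x {y} * μ (sec A y) := by
  classical
  have hAm := hA.1.1
  have hpart : sec A x = ⋃ y : G, sec A x ∩ SCyl {x} (fun _ => y) := by
    ext f
    simp only [Set.mem_iUnion, Set.mem_inter_iff, SCyl, Set.mem_setOf_eq,
      Finset.mem_singleton]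
    exact ⟨fun h => ⟨f x, h, fun z hz => by rw [hz]⟩, fun ⟨y, h, _⟩ => h⟩
  have hdisj : Pairwise (Function.onFun Disjoint
      fun y => sec A x ∩ SCyl {x} (fun _ => y)) := by
    intro y y' hyy'
    refine Set.disjoint_left.mpr ?_
    rintro f ⟨_, h1⟩ ⟨_, h2⟩
    exact hyy' ((h1 x (Finset.mem_singleton_self x)).symm.trans
      (h2 x (Finset.mem_singleton_self x)))
  rw [hpart, measure_iUnion hdisj
    (fun y => (measurableSet_sec hAm x).inter (measurableSet_SCyl _ _))]
  apply tsum_congr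
  intro y
  have hcyl : μ (SCyl {x} (fun _ => y)) = K x {y} := by
    rw [μ_SCyl hμ, Finset.prod_singleton]
  by_cases hy0 : K x {y} = 0
  · rw [hy0, zero_mul]
    exact measure_mono_null Set.inter_subset_right (by rw [hcyl, hy0])
  have hyx : y ≠ x := by
    rintro rfl
    exact hy0 (K_self_eq_zero hcf y)
  -- move the root from x to y on the cylinder
  have hmove : sec A x ∩ SCyl {x} (fun _ => y) = sec A y ∩ SCyl {x} (fun _ => y) := by
    ext f
    simp only [Set.mem_inter_iff, SCyl, Set.mem_setOf_eq, Finset.mem_singleton]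
    constructor
    · rintro ⟨h1, h2⟩
      have hfx : f x = y := h2 x rfl
      exact ⟨(hA.1.2 f x y (Relation.ReflTransGen.single (Or.inl hfx))).mp h1, h2⟩
    · rintro ⟨h1, h2⟩
      have hfx : f x = y := h2 x rfl
      exact ⟨(hA.1.2 f x y (Relation.ReflTransGen.single (Or.inl hfx))).mpr h1, h2⟩
  have hOc : μ (Avoid {x} y)ᶜ = 0 := by
    have : (Avoid ({x} : Set G) y)ᶜ = {f : G → G | ∃ m, f^[m] y = x} := by
      ext f
      simp [Avoid]
    rw [this]
    exact hits_null hμ hcf (Ne.symm hyx) (d := 1) (p := fun i => if i = 0 then x else y)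
      (by simp) (by simp) (by intro i hi; interval_cases i; simpa using hy0)
  have hswap : μ (sec A y ∩ SCyl {x} (fun _ => y))
      = μ ((sec A y ∩ Avoid {x} y) ∩ SCyl {x} (fun _ => y)) := by
    rw [Set.inter_right_comm]
    exact (measure_inter_compl_null hOc).symm
  rw [hmove, hswap,
    indep_of_insensitive hμ
      ((measurableSet_sec hAm y).inter (measurableSet_Avoid _ _))
      (insensitive_sec_avoid hA (Set.finite_singleton x) (by simpa using hyx))
      (by simp) (fun _ => y),
    hcyl, measure_inter_compl_null hOc, mul_comm]

/-- By the Liouville property, `x ↦ μ(A_x)` is constant. -/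
lemma sec_const (hK : ∀ x, IsProbabilityMeasure (K x)) (hcf : CycleFree K)
    (hLiou : LiouvilleProperty K) (hμ : IsCMTLaw K μ) [IsProbabilityMeasure μ]
    {A : Set (G × (G → G))} (hA : IsTailBranchProperty A) (x y : G) :
    μ (sec A x) = μ (sec A y) := by
  set h : G → ℝ := fun z => (μ (sec A z)).toReal with hh
  have hbound : ∀ z, |h z| ≤ 1 := by
    intro z
    rw [hh, abs_of_nonneg ENNReal.toReal_nonneg]
    simpa using ENNReal.toReal_mono one_ne_top prob_le_one
  have hharm : IsKHarmonic K h := by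
    intro z
    have h1 : μ (sec A z) = ∑' w, K z {w} * μ (sec A w) := sec_harmonic hcf hμ hA z
    have h2 : (μ (sec A z)).toReal = ∑' w, (K z {w} * μ (sec A w)).toReal := by
      rw [h1]
      exact ENNReal.tsum_toReal_eq fun w => by
        haveI := hK z
        exact ENNReal.mul_ne_top (measure_ne_top _ _) (measure_ne_top _ _)
    rw [hh]
    simp only []
    rw [h2]
    exact tsum_congr fun w => ENNReal.toReal_mul
  have := hLiou h ⟨1, hbound⟩ hharm x y
  exact (ENNReal.toReal_eq_toReal_iff' (measure_ne_top _ _) (measure_ne_top _ _)).mp this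

/-- Orbit-prefix event. -/
def Pref (v : G) (n : ℕ) (e : ℕ → G) : Set (G → G) := {f | ∀ k ≤ n, f^[k] v = e k}

lemma measurableSet_Pref (v : G) (n : ℕ) (e : ℕ → G) : MeasurableSet (Pref v n e) := by
  have h : Pref v n e = ⋂ k ∈ Finset.range (n + 1), (fun f : G → G => f^[k] v) ⁻¹' {e k} := by
    ext f
    simp only [Pref, Set.mem_setOf_eq, Set.mem_iInter, Set.mem_preimage,
      Set.mem_singleton_iff, Finset.mem_range]
    exact ⟨fun h k hk => h k (by omega), fun h k hk => h k (by omega)⟩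
  rw [h]
  exact MeasurableSet.biInter (Finset.range (n + 1)).countable_toSet
    (fun k _ => measurable_iterate v k (measurableSet_singleton _))

lemma Pref_eq_PathCyl {v : G} {n : ℕ} {e : ℕ → G} (he0 : e 0 = v) :
    Pref v n e = PathCyl n e := by
  ext f
  constructor
  · intro hf k hk
    have h1 := hf k (by omega)
    have h2 := hf (k + 1) (by omega)
    rw [← h1, ← h2]
    exact (Function.iterate_succ_apply' f k v).symm
  · intro hf k hk
    induction k with
    | zero => exact he0.symm
    | succ m ih =>
        rw [Function.iterate_succ_apply', ih (by omega)]
        exact hf m (by omega)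

/-- Independence of `A_v` from orbit prefixes. -/
lemma prefix_indep (hK : ∀ x, IsProbabilityMeasure (K x)) (hcf : CycleFree K)
    (hLiou : LiouvilleProperty K) (hμ : IsCMTLaw K μ) [IsProbabilityMeasure μ]
    {A : Set (G × (G → G))} (hA : IsTailBranchProperty A) (v : G) (n : ℕ) (e : ℕ → G) :
    μ (sec A v ∩ Pref v n e) = μ (sec A v) * μ (Pref v n e) := by
  classical
  have hAm := hA.1.1
  by_cases he0 : e 0 = v
  swap
  · have hempty : Pref v n e = ∅ := by
      ext f
      simp only [Pref, Set.mem_setOf_eq, Set.mem_empty_iff_false, iff_false, not_forall]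
      exact ⟨0, Nat.zero_le n, fun h => he0 (by rw [← h]; rfl)⟩
    rw [hempty]
    simp
  by_cases hinj : ∀ i ≤ n, ∀ j ≤ n, e i = e j → i = j
  swap
  · push_neg at hinj
    obtain ⟨i, hi, j, hj, hij, hne⟩ := hinj
    have hnull : μ (Pref v n e) = 0 := by
      refine measure_mono_null ?_ (noninj_null hμ hcf v)
      intro f hf
      rcases Nat.lt_or_ge i j with h | h
      · exact ⟨i, j, h, by rw [hf i hi, hf j hj, hij]⟩
      · have : j < i := by omega
        exact ⟨j, i, this, by rw [hf i hi, hf j hj, hij]⟩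
    rw [hnull, mul_zero]
    exact measure_mono_null Set.inter_subset_right hnull
  rw [Pref_eq_PathCyl he0]
  have hinj' : ∀ i < n, ∀ j < n, e i = e j → i = j :=
    fun i hi j hj hij => hinj i (by omega) j (by omega) hij
  have hPC : μ (PathCyl n e) = ∏ k ∈ Finset.range n, K (e k) {e (k + 1)} :=
    μ_PathCyl hμ hinj'
  by_cases hpos : μ (PathCyl n e) = 0
  · rw [hpos, mul_zero]
    exact measure_mono_null Set.inter_subset_right hpos
  have hfec : ∀ k < n, K (e k) {e (k + 1)} ≠ 0 := by
    intro k hk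
    rw [hPC] at hpos
    exact Finset.prod_ne_zero_iff.mp hpos k (Finset.mem_range.mpr hk)
  set S' : Set G := e '' {k | k < n} with hS'
  have hS'fin : S'.Finite := (Set.finite_Iio n).image e
  have henS' : e n ∉ S' := by
    rintro ⟨k, hk, hke⟩
    simp only [Set.mem_setOf_eq] at hk
    exact absurd (hinj k (le_of_lt hk) n le_rfl hke) (by omega)
  have hOc : μ (Avoid S' (e n))ᶜ = 0 := by
    have hcover : (Avoid S' (e n))ᶜ ⊆
        ⋃ k ∈ Finset.range n, {f : G → G | ∃ m, f^[m] (e n) = e k} := by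
      intro f hf
      simp only [Avoid, Set.mem_compl_iff, Set.mem_setOf_eq, not_forall, not_not] at hf
      obtain ⟨m, hm⟩ := hf
      obtain ⟨k, hk, hke⟩ := hm
      exact Set.mem_biUnion (Finset.mem_range.mpr hk) ⟨m, by rw [hke]⟩
    refine measure_mono_null hcover (measure_biUnion_null_iff
      (Finset.range n).countable_toSet |>.mpr fun k hk => ?_)
    have hkn := Finset.mem_range.mp hk
    refine hits_null hμ hcf (x := e k) (z := e n)
      (fun h => absurd (hinj k (le_of_lt hkn) n le_rfl h) (by omega))
      (d := n - k) (p := fun i => e (k + i)) (by simp) ?_ (fun i hi => ?_)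
    · show e (k + (n - k)) = e n
      rw [show k + (n - k) = n from by omega]
    · show K (e (k + i)) {e (k + (i + 1))} ≠ 0
      rw [show k + (i + 1) = (k + i) + 1 from by omega]
      exact hfec (k + i) (by omega)
  have hmove : sec A v ∩ PathCyl n e = sec A (e n) ∩ PathCyl n e := by
    ext f
    simp only [Set.mem_inter_iff, and_congr_left_iff]
    intro hf
    have hsc : SameComponent f v (e n) := he0 ▸ pathCyl_sameComponent hf
    exact hA.1.2 f v (e n) hsc
  rw [hmove]
  have hswap : μ (sec A (e n) ∩ PathCyl n e)
      = μ ((sec A (e n) ∩ Avoid S' (e n)) ∩ PathCyl n e) := by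
    rw [Set.inter_right_comm]
    exact (measure_inter_compl_null hOc).symm
  rw [hswap]
  have hPCeq : PathCyl n e = SCyl ((Finset.range n).image e) (extFun n e) :=
    PathCyl_eq_SCyl hinj'
  have htsub : ↑((Finset.range n).image e) ⊆ S' := by
    intro z hz
    simp only [Finset.coe_image, Finset.coe_range, Set.mem_image, Set.mem_Iio] at hz
    obtain ⟨k, hk, hke⟩ := hz
    exact ⟨k, hk, hke⟩
  rw [hPCeq, indep_of_insensitive hμ
    ((measurableSet_sec hAm (e n)).inter (measurableSet_Avoid _ _))
    (insensitive_sec_avoid hA hS'fin henS') htsub (extFun n e),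
    measure_inter_compl_null hOc, sec_const hK hcf hLiou hμ hA (e n) v]

/-- Independence of `A_y` from the whole ancestral line of `y`. -/
lemma line_indep (hK : ∀ x, IsProbabilityMeasure (K x)) (hcf : CycleFree K)
    (hLiou : LiouvilleProperty K) (hμ : IsCMTLaw K μ) [IsProbabilityMeasure μ]
    {A : Set (G × (G → G))} (hA : IsTailBranchProperty A) (y : G)
    {P : Set (ℕ → G)} (hP : MeasurableSet P) :
    μ (sec A y ∩ lineMap y ⁻¹' P) = μ (sec A y) * μ (lineMap y ⁻¹' P) := by
  classical
  have hAm := hA.1.1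
  -- the two measures on path space
  set ν₁ : Measure (ℕ → G) := Measure.map (lineMap y) (μ.restrict (sec A y)) with hν₁
  set ν₂ : Measure (ℕ → G) := μ (sec A y) • Measure.map (lineMap y) μ with hν₂
  haveI : IsFiniteMeasure (Measure.map (lineMap y) (μ.restrict (sec A y))) := by
    constructor
    rw [Measure.map_apply (measurable_lineMap y) MeasurableSet.univ]
    exact lt_of_le_of_lt (measure_mono (Set.subset_univ _)) (measure_lt_top _ _)
  haveI : IsFiniteMeasure ν₂ := by
    constructor
    rw [hν₂, Measure.smul_apply, smul_eq_mul]
    exact ENNReal.mul_lt_top (measure_lt_top _ _)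
      (lt_of_le_of_lt (measure_mono (Set.subset_univ _)) (by
        rw [Measure.map_apply (measurable_lineMap y) MeasurableSet.univ]
        exact measure_lt_top _ _))
  have hext : ν₁ = ν₂ := by
    apply ext_SCyl (ι := ℕ)
    · intro t w
      set n := t.sup id with hn
      have hkn : ∀ k ∈ t, k < n + 1 := fun k hk =>
        Nat.lt_succ_of_le (Finset.le_sup (f := id) hk)
      set exte : (Fin (n + 1) → G) → ℕ → G :=
        fun e k => if h : k < n + 1 then e ⟨k, h⟩ else y with hexte
      set C := {e : Fin (n + 1) → G // ∀ k : Fin (n + 1), (k : ℕ) ∈ t → e k = w k} with hC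
      have hdecomp : lineMap y ⁻¹' SCyl t w = ⋃ e : C, Pref y n (exte e) := by
        ext f
        simp only [Set.mem_preimage, SCyl, Set.mem_setOf_eq, Set.mem_iUnion]
        constructor
        · intro hf
          refine ⟨⟨fun k => f^[(k : ℕ)] y, fun k hk => hf k hk⟩, ?_⟩
          intro k hk
          show f^[k] y = exte (fun k : Fin (n + 1) => f^[(k : ℕ)] y) k
          simp only [hexte, dif_pos (by omega : k < n + 1)]
        · rintro ⟨e, hf⟩ k hk
          have hk' := hkn k hk
          have h3 := hf k (by omega)
          simp only [hexte, dif_pos hk'] at h3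
          show f^[k] y = w k
          rw [h3]
          exact e.2 ⟨k, hk'⟩ hk
      have hdisj : Pairwise (Function.onFun Disjoint fun e : C => Pref y n (exte e)) := by
        intro e e' hne
        refine Set.disjoint_left.mpr fun f hf hf' => ?_
        apply hne
        apply Subtype.ext
        funext k
        have h1 := hf (k : ℕ) (by omega)
        have h2 := hf' (k : ℕ) (by omega)
        simp only [hexte, dif_pos k.isLt] at h1 h2
        rw [Fin.eta] at h1 h2
        rw [← h1, ← h2]
      have hmeas : ∀ e : C, MeasurableSet (Pref y n (exte e)) :=
        fun e => measurableSet_Pref y n (exte e)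
      have h1 : ν₁ (SCyl t w) = ∑' e : C, μ (sec A y ∩ Pref y n (exte e)) := by
        rw [hν₁, Measure.map_apply (measurable_lineMap y) (measurableSet_SCyl t w),
          Measure.restrict_apply' (measurableSet_sec hAm y), hdecomp,
          Set.iUnion_inter, measure_iUnion]
        · congr 1
          funext e
          rw [Set.inter_comm]
        · intro e e' hne
          exact Set.disjoint_left.mpr fun f hf hf' =>
            Set.disjoint_left.mp (hdisj hne) hf.1 hf'.1
        · exact fun e => (hmeas e).inter (measurableSet_sec hAm y)
      have h2 : ν₂ (SCyl t w) = μ (sec A y) * ∑' e : C, μ (Pref y n (exte e)) := by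
        rw [hν₂, Measure.smul_apply, smul_eq_mul,
          Measure.map_apply (measurable_lineMap y) (measurableSet_SCyl t w), hdecomp,
          measure_iUnion hdisj hmeas]
      rw [h1, h2, ← ENNReal.tsum_mul_left]
      exact tsum_congr fun e => prefix_indep hK hcf hLiou hμ hA y n (exte e)
    · rw [hν₁, hν₂, Measure.map_apply (measurable_lineMap y) MeasurableSet.univ,
        Measure.smul_apply, smul_eq_mul,
        Measure.map_apply (measurable_lineMap y) MeasurableSet.univ]
      simp [Measure.restrict_apply' (measurableSet_sec hAm y)]
  have h1 : ν₁ P = μ (sec A y ∩ lineMap y ⁻¹' P) := by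
    rw [hν₁, Measure.map_apply (measurable_lineMap y) hP,
      Measure.restrict_apply' (measurableSet_sec hAm y), Set.inter_comm]
  have h2 : ν₂ P = μ (sec A y) * μ (lineMap y ⁻¹' P) := by
    rw [hν₂, Measure.smul_apply, smul_eq_mul,
      Measure.map_apply (measurable_lineMap y) hP]
  rw [← h1, ← h2, hext]

lemma measure_inter_congr_null {α : Type*} [MeasurableSpace α] {ν : Measure α}
    {O O' M : Set α} (hsub : O' ⊆ O) (hdiff : O \ O' ⊆ M) (hM : ν M = 0) (Y : Set α) :
    ν (Y ∩ O) = ν (Y ∩ O') := by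
  apply le_antisymm
  · calc ν (Y ∩ O) ≤ ν ((Y ∩ O') ∪ M) := measure_mono (fun a ⟨ha1, ha2⟩ => by
        by_cases h : a ∈ O'
        · exact Or.inl ⟨ha1, h⟩
        · exact Or.inr (hdiff ⟨ha2, h⟩))
      _ ≤ ν (Y ∩ O') + ν M := measure_union_le _ _
      _ = ν (Y ∩ O') := by rw [hM, add_zero]
  · exact measure_mono (Set.inter_subset_inter_right Y hsub)

/-- **Main lemma**: `A_v` is independent of every finite cylinder. -/
lemma main_indep (hK : ∀ x, IsProbabilityMeasure (K x)) (hcf : CycleFree K)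
    (hLiou : LiouvilleProperty K) (hμ : IsCMTLaw K μ) [IsProbabilityMeasure μ]
    {A : Set (G × (G → G))} (hA : IsTailBranchProperty A) (v : G)
    (t : Finset G) (u : G → G) :
    μ (sec A v ∩ SCyl t u) = μ (sec A v) * μ (SCyl t u) := by
  classical
  have hAm := hA.1.1
  set ext : (Σ T : ℕ, (Fin (T + 1) → G)) → ℕ → G :=
    fun i k => if h : k < i.1 + 1 then i.2 ⟨k, h⟩ else v with hext
  set pc : (Σ T : ℕ, (Fin (T + 1) → G)) → Set (G → G) := fun i =>
    {f | (∀ k ≤ i.1, f^[k] v = ext i k) ∧ (∀ j, i.1 ≤ j → f^[j] v ∉ (t : Set G))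
      ∧ (i.1 = 0 ∨ ext i (i.1 - 1) ∈ (t : Set G))} with hpc
  -- measurability of pieces
  have hpcm : ∀ i, MeasurableSet (pc i) := by
    intro i
    have h1 : pc i = Pref v i.1 (ext i)
        ∩ (⋂ j : ℕ, {f : G → G | i.1 ≤ j → f^[j] v ∉ (t : Set G)})
        ∩ {f : G → G | i.1 = 0 ∨ ext i (i.1 - 1) ∈ (t : Set G)} := by
      ext f
      simp only [hpc, Set.mem_setOf_eq, Set.mem_inter_iff, Set.mem_iInter, Pref]
      tauto
    rw [h1]
    refine ((measurableSet_Pref v i.1 (ext i)).inter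
      (MeasurableSet.iInter fun j => ?_)).inter ?_
    · by_cases hj : i.1 ≤ j
      · have : {f : G → G | i.1 ≤ j → f^[j] v ∉ (t : Set G)}
            = (fun f : G → G => f^[j] v) ⁻¹' ((t : Set G)ᶜ) := by
          ext f; simp [hj]
        rw [this]
        exact measurable_iterate v j (measurableSet_all _)
      · have : {f : G → G | i.1 ≤ j → f^[j] v ∉ (t : Set G)} = Set.univ := by
          ext f; simp [hj]
        rw [this]
        exact MeasurableSet.univ
    · by_cases hg : i.1 = 0 ∨ ext i (i.1 - 1) ∈ (t : Set G)
      · have : {f : G → G | i.1 = 0 ∨ ext i (i.1 - 1) ∈ (t : Set G)} = Set.univ :=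
          Set.eq_univ_of_forall fun _ => hg
        rw [this]; exact MeasurableSet.univ
      · have : {f : G → G | i.1 = 0 ∨ ext i (i.1 - 1) ∈ (t : Set G)} = ∅ :=
          Set.eq_empty_iff_forall_notMem.mpr fun f hf => hg hf
        rw [this]; exact MeasurableSet.empty
  -- pairwise disjointness
  have hdisj : Pairwise (Function.onFun Disjoint pc) := by
    intro i i' hne
    refine Set.disjoint_left.mpr fun f hf hf' => ?_
    obtain ⟨h1, h2, h3⟩ := hf
    obtain ⟨h1', h2', h3'⟩ := hf'
    have hcontr : ∀ (a b : (Σ T : ℕ, (Fin (T + 1) → G))),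
        (∀ k ≤ a.1, f^[k] v = ext a k) → (∀ j, a.1 ≤ j → f^[j] v ∉ (t : Set G)) →
        (∀ k ≤ b.1, f^[k] v = ext b k) →
        (b.1 = 0 ∨ ext b (b.1 - 1) ∈ (t : Set G)) → a.1 < b.1 → False := by
      rintro a b ha1 ha2 hb1 hb3 hab
      rcases hb3 with h0 | hmem
      · omega
      have hbT : ext b (b.1 - 1) = f^[b.1 - 1] v := (hb1 (b.1 - 1) (by omega)).symm
      rw [hbT] at hmem
      exact ha2 (b.1 - 1) (by omega) hmem
    rcases lt_trichotomy i.1 i'.1 with h | h | h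
    · exact hcontr i i' h1 h2 h1' h3' h
    · -- equal lengths: the labels must coincide
      apply hne
      obtain ⟨T, e⟩ := i
      obtain ⟨T', e'⟩ := i'
      simp only at h
      subst h
      congr 1
      funext k
      have ha := h1 (k : ℕ) (by omega : (k : ℕ) ≤ T)
      have hb := h1' (k : ℕ) (by omega : (k : ℕ) ≤ T)
      simp only [hext, dif_pos k.isLt] at ha hb
      rw [Fin.eta] at ha hb
      rw [← ha, ← hb]
    · exact hcontr i' i h1' h2' h1 h3 h
  -- covering up to a null set
  have hcover : (⋃ i, pc i)ᶜ ⊆ {f : G → G | ∃ a b, a < b ∧ f^[a] v = f^[b] v} := by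
    intro f hf
    by_contra hninj
    simp only [Set.mem_setOf_eq, not_exists] at hninj
    apply hf
    have hinj : Set.InjOn (fun j => f^[j] v) ((fun j => f^[j] v) ⁻¹' (t : Set G)) := by
      intro a _ b _ hab
      by_contra hne
      rcases Nat.lt_or_ge a b with h | h
      · exact hninj a b ⟨h, hab⟩
      · have : b < a := by omega
        exact hninj b a ⟨this, hab.symm⟩
    have hVfin : ((fun j => f^[j] v) ⁻¹' (t : Set G)).Finite :=
      Set.Finite.preimage hinj t.finite_toSet
    set F := hVfin.toFinset with hF
    by_cases hFne : F.Nonempty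
    · set T := F.max' hFne + 1 with hT
      refine Set.mem_iUnion.mpr ⟨⟨T, fun k => f^[(k : ℕ)] v⟩, ?_, ?_, ?_⟩
      · intro k hk
        have hk' : k ≤ T := hk
        show f^[k] v = ext ⟨T, fun k => f^[(k : ℕ)] v⟩ k
        simp only [hext]
        rw [dif_pos (show k < T + 1 by omega)]
      · intro j hj
        have hj' : T ≤ j := hj
        intro hmem
        have hjF : j ∈ F := hVfin.mem_toFinset.mpr hmem
        have := F.le_max' j hjF
        omega
      · right
        have hmax : F.max' hFne ∈ F := F.max'_mem hFne
        have hmem : f^[F.max' hFne] v ∈ (t : Set G) := hVfin.mem_toFinset.mp hmax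
        show ext ⟨T, fun k => f^[(k : ℕ)] v⟩ (T - 1) ∈ (t : Set G)
        simp only [hext]
        rw [dif_pos (show T - 1 < T + 1 by omega)]
        show f^[((⟨T - 1, by omega⟩ : Fin (T + 1)) : ℕ)] v ∈ (t : Set G)
        have hc : ((⟨T - 1, by omega⟩ : Fin (T + 1)) : ℕ) = F.max' hFne := by
          show T - 1 = F.max' hFne
          omega
        rw [hc]
        exact hmem
    · refine Set.mem_iUnion.mpr ⟨⟨0, fun _ => v⟩, ?_, ?_, Or.inl rfl⟩
      · intro k hk
        have hk' : k ≤ 0 := hk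
        have : k = 0 := by omega
        subst this
        show f^[0] v = ext ⟨0, fun _ => v⟩ 0
        simp [hext]
      · intro j _ hmem
        exact hFne ⟨j, hVfin.mem_toFinset.mpr hmem⟩
  have hcnull : μ (⋃ i, pc i)ᶜ = 0 :=
    measure_mono_null hcover (noninj_null hμ hcf v)
  -- summation identity for any measurable X
  have hsum : ∀ X : Set (G → G), MeasurableSet X → μ X = ∑' i, μ (X ∩ pc i) := by
    intro X hX
    rw [← measure_inter_compl_null (X := X) hcnull, Set.inter_iUnion,
      measure_iUnion (fun i i' hne => Set.disjoint_left.mpr fun f hf hf' =>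
        Set.disjoint_left.mp (hdisj hne) hf.2 hf'.2)
      (fun i => hX.inter (hpcm i))]
  -- per-piece independence
  have hpiece : ∀ i, μ ((sec A v ∩ SCyl t u) ∩ pc i)
      = μ (sec A v) * μ (SCyl t u ∩ pc i) := by
    rintro ⟨T, e⟩
    set ee : ℕ → G := ext ⟨T, e⟩ with hee
    by_cases hinj : ∀ a ≤ T, ∀ b ≤ T, ee a = ee b → a = b
    swap
    · have hnull : μ (pc ⟨T, e⟩) = 0 := by
        refine measure_mono_null ?_ (noninj_null hμ hcf v)
        rintro f ⟨h1, -, -⟩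
        push_neg at hinj
        obtain ⟨a, ha, b, hb, hab, hne⟩ := hinj
        rcases Nat.lt_or_ge a b with h | h
        · exact ⟨a, b, h, by rw [h1 a ha, h1 b hb]; exact hab⟩
        · exact ⟨b, a, by omega, by rw [h1 b hb, h1 a ha]; exact hab.symm⟩
      rw [measure_mono_null Set.inter_subset_right hnull,
        measure_mono_null Set.inter_subset_right hnull, mul_zero]
    by_cases he0 : ee 0 = v
    swap
    · have hempty : pc ⟨T, e⟩ = ∅ := by
        ext f
        simp only [hpc, Set.mem_setOf_eq, Set.mem_empty_iff_false, iff_false]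
        rintro ⟨h1, -, -⟩
        exact he0 (h1 0 (Nat.zero_le _)).symm
      rw [hempty]
      simp
    by_cases hent : ee T ∈ (t : Set G)
    · have hempty : pc ⟨T, e⟩ = ∅ := by
        ext f
        simp only [hpc, Set.mem_setOf_eq, Set.mem_empty_iff_false, iff_false]
        rintro ⟨h1, h2, -⟩
        exact h2 T le_rfl ((h1 T le_rfl) ▸ hent)
      rw [hempty]
      simp
    by_cases hguard : T = 0 ∨ ee (T - 1) ∈ (t : Set G)
    swap
    · have hempty : pc ⟨T, e⟩ = ∅ := by
        ext f
        simp only [hpc, Set.mem_setOf_eq, Set.mem_empty_iff_false, iff_false]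
        rintro ⟨-, -, h3⟩
        exact hguard h3
      rw [hempty]
      simp
    -- piece as path cylinder ∩ avoidance
    have hpceq : pc ⟨T, e⟩ = PathCyl T ee ∩ Avoid (t : Set G) (ee T) := by
      ext f
      constructor
      · rintro ⟨h1, h2, -⟩
        rw [← hee] at h1
        have h2' : ∀ j, T ≤ j → f^[j] v ∉ (t : Set G) := h2
        refine ⟨?_, ?_⟩
        · have : f ∈ Pref v T ee := h1
          rwa [Pref_eq_PathCyl he0] at this
        · intro n
          show f^[n] (ee T) ∉ (t : Set G)
          rw [← h1 T le_rfl, ← Function.iterate_add_apply]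
          exact h2' (n + T) (by omega)
      · rintro ⟨hp, ha⟩
        have h1 : f ∈ Pref v T ee := by rwa [Pref_eq_PathCyl he0]
        refine ⟨h1, ?_, hguard⟩
        intro j hj
        have hj' : T ≤ j := hj
        have hT : f^[T] v = ee T := h1 T le_rfl
        have hiter : f^[j] v = f^[j - T] (ee T) := by
          rw [← hT, ← Function.iterate_add_apply, show j - T + T = j from by omega]
        rw [hiter]
        exact ha (j - T)
    have hinj' : ∀ a < T, ∀ b < T, ee a = ee b → a = b :=
      fun a ha b hb hab => hinj a (by omega) b (by omega) hab
    by_cases hP0 : μ (PathCyl T ee) = 0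
    · have hnull : μ (pc ⟨T, e⟩) = 0 :=
        measure_mono_null (by rw [hpceq]; exact Set.inter_subset_left) hP0
      rw [measure_mono_null Set.inter_subset_right hnull,
        measure_mono_null Set.inter_subset_right hnull, mul_zero]
    have hPC : μ (PathCyl T ee) = ∏ k ∈ Finset.range T, K (ee k) {ee (k + 1)} :=
      μ_PathCyl hμ hinj'
    have hfec : ∀ k < T, K (ee k) {ee (k + 1)} ≠ 0 := by
      intro k hk
      rw [hPC] at hP0
      exact Finset.prod_ne_zero_iff.mp hP0 k (Finset.mem_range.mpr hk)
    set S' : Set G := (t : Set G) ∪ ee '' {k | k < T} with hS'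
    have hS'fin : S'.Finite := t.finite_toSet.union ((Set.finite_Iio T).image ee)
    have heeTS' : ee T ∉ S' := by
      rintro (h | ⟨k, hk, hke⟩)
      · exact hent h
      · simp only [Set.mem_setOf_eq] at hk
        exact absurd (hinj k (by omega) T le_rfl hke) (by omega)
    -- null hitting events
    set M : Set (G → G) := ⋃ k ∈ Finset.range T, {f : G → G | ∃ m, f^[m] (ee T) = ee k}
      with hM
    have hMnull : μ M = 0 := by
      refine measure_biUnion_null_iff (Finset.range T).countable_toSet |>.mpr fun k hk => ?_
      have hkT := Finset.mem_range.mp hk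
      refine hits_null hμ hcf (x := ee k) (z := ee T)
        (fun h => absurd (hinj k (by omega) T le_rfl h) (by omega))
        (d := T - k) (p := fun i => ee (k + i)) (by simp) ?_ (fun i hi => ?_)
      · show ee (k + (T - k)) = ee T
        rw [show k + (T - k) = T from by omega]
      · show K (ee (k + i)) {ee (k + (i + 1))} ≠ 0
        rw [show k + (i + 1) = (k + i) + 1 from by omega]
        exact hfec (k + i) (by omega)
    have hsub : Avoid S' (ee T) ⊆ Avoid (t : Set G) (ee T) := by
      intro f hf n hmem
      exact hf n (Or.inl hmem)
    have hdiffM : Avoid (t : Set G) (ee T) \ Avoid S' (ee T) ⊆ M := by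
      rintro f ⟨hf1, hf2⟩
      simp only [Avoid, Set.mem_setOf_eq, not_forall, not_not] at hf2
      obtain ⟨n, hn⟩ := hf2
      rcases hn with h | ⟨k, hk, hke⟩
      · exact absurd h (hf1 n)
      · simp only [Set.mem_setOf_eq] at hk
        exact Set.mem_biUnion (Finset.mem_range.mpr hk) ⟨n, hke.symm⟩
    -- root move
    have hmove : sec A v ∩ PathCyl T ee = sec A (ee T) ∩ PathCyl T ee := by
      ext f
      simp only [Set.mem_inter_iff, and_congr_left_iff]
      intro hf
      exact hA.1.2 f v (ee T) (he0 ▸ pathCyl_sameComponent hf)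
    -- merge the two cylinders
    have hPCeq : PathCyl T ee = SCyl ((Finset.range T).image ee) (extFun T ee) :=
      PathCyl_eq_SCyl hinj'
    set t₁ : Finset G := (Finset.range T).image ee with ht₁
    set w₁ : G → G := extFun T ee with hw₁
    by_cases hcompat : ∀ x ∈ t₁ ∩ t, w₁ x = u x
    swap
    · push_neg at hcompat
      obtain ⟨x, hx, hxne⟩ := hcompat
      have hxt₁ := Finset.mem_inter.mp hx
      have hempty : PathCyl T ee ∩ SCyl t u = ∅ := by
        rw [hPCeq]
        ext f
        simp only [Set.mem_inter_iff, Set.mem_empty_iff_false, iff_false, not_and]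
        intro hf1 hf2
        exact hxne ((hf1 x hxt₁.1).symm.trans (hf2 x hxt₁.2))
      have hz1 : μ ((sec A v ∩ SCyl t u) ∩ pc ⟨T, e⟩) = 0 := by
        refine measure_mono_null ?_ (show μ (∅ : Set (G → G)) = 0 from measure_empty)
        rw [← hempty, hpceq]
        rintro f ⟨⟨-, hc⟩, hp, -⟩
        exact ⟨hp, hc⟩
      have hz2 : μ (SCyl t u ∩ pc ⟨T, e⟩) = 0 := by
        refine measure_mono_null ?_ (show μ (∅ : Set (G → G)) = 0 from measure_empty)
        rw [← hempty, hpceq]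
        rintro f ⟨hc, hp, -⟩
        exact ⟨hp, hc⟩
      rw [hz1, hz2, mul_zero]
    have hmerge : PathCyl T ee ∩ SCyl t u = SCyl (t₁ ∪ t) (t₁.piecewise w₁ u) := by
      rw [hPCeq]
      ext f
      constructor
      · rintro ⟨h1, h2⟩ x hx
        rcases Finset.mem_union.mp hx with hx1 | hx2
        · rw [Finset.piecewise_eq_of_mem _ _ _ hx1]
          exact h1 x hx1
        · by_cases hx1 : x ∈ t₁
          · rw [Finset.piecewise_eq_of_mem _ _ _ hx1]
            exact h1 x hx1
          · rw [Finset.piecewise_eq_of_notMem _ _ _ hx1]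
            exact h2 x hx2
      · intro hf
        constructor
        · intro x hx
          have := hf x (Finset.mem_union_left _ hx)
          rwa [Finset.piecewise_eq_of_mem _ _ _ hx] at this
        · intro x hx
          have := hf x (Finset.mem_union_right _ hx)
          by_cases hx1 : x ∈ t₁
          · rw [Finset.piecewise_eq_of_mem _ _ _ hx1] at this
            rw [this]
            exact (hcompat x (Finset.mem_inter.mpr ⟨hx1, hx⟩)).symm ▸ rfl
          · rwa [Finset.piecewise_eq_of_notMem _ _ _ hx1] at this
      -- done
    have httss : ↑(t₁ ∪ t) ⊆ S' := by
      intro z hz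
      rcases Finset.mem_union.mp hz with h | h
      · obtain ⟨k, hk, hke⟩ := Finset.mem_image.mp h
        exact Or.inr ⟨k, Finset.mem_range.mp hk, hke⟩
      · exact Or.inl h
    have hAvP : Avoid S' (ee T)
        = lineMap (ee T) ⁻¹' {ω : ℕ → G | ∀ n, ω n ∉ S'} := rfl
    have hPPm : MeasurableSet {ω : ℕ → G | ∀ n, ω n ∉ S'} := by
      have h : {ω : ℕ → G | ∀ n, ω n ∉ S'} = ⋂ n, (fun ω : ℕ → G => ω n) ⁻¹' S'ᶜ := by
        ext ω; simp
      rw [h]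
      exact MeasurableSet.iInter fun n => measurable_pi_apply n (measurableSet_all _)
    calc μ ((sec A v ∩ SCyl t u) ∩ pc ⟨T, e⟩)
        = μ ((sec A v ∩ PathCyl T ee ∩ SCyl t u) ∩ Avoid (t : Set G) (ee T)) := by
          rw [hpceq]
          exact congrArg μ (by ext f; simp only [Set.mem_inter_iff]; tauto)
      _ = μ ((sec A v ∩ PathCyl T ee ∩ SCyl t u) ∩ Avoid S' (ee T)) :=
          measure_inter_congr_null hsub hdiffM hMnull _
      _ = μ ((sec A (ee T) ∩ Avoid S' (ee T)) ∩ SCyl (t₁ ∪ t) (t₁.piecewise w₁ u)) := by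
          rw [hmove, ← hmerge]
          exact congrArg μ (by ext f; simp only [Set.mem_inter_iff]; tauto)
      _ = μ (sec A (ee T) ∩ Avoid S' (ee T)) * μ (SCyl (t₁ ∪ t) (t₁.piecewise w₁ u)) :=
          indep_of_insensitive hμ
            ((measurableSet_sec hAm (ee T)).inter (measurableSet_Avoid _ _))
            (insensitive_sec_avoid hA hS'fin heeTS') httss (t₁.piecewise w₁ u)
      _ = (μ (sec A (ee T)) * μ (Avoid S' (ee T))) * μ (SCyl (t₁ ∪ t) (t₁.piecewise w₁ u)) := by
          rw [hAvP, line_indep hK hcf hLiou hμ hA (ee T) hPPm]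
      _ = μ (sec A v) * (μ (Avoid S' (ee T)) * μ (SCyl (t₁ ∪ t) (t₁.piecewise w₁ u))) := by
          rw [sec_const hK hcf hLiou hμ hA (ee T) v, mul_assoc]
      _ = μ (sec A v) * μ (Avoid S' (ee T) ∩ SCyl (t₁ ∪ t) (t₁.piecewise w₁ u)) := by
          rw [indep_of_insensitive hμ (measurableSet_Avoid _ _)
            (insensitive_avoid S' (ee T)) httss (t₁.piecewise w₁ u)]
      _ = μ (sec A v) * μ ((PathCyl T ee ∩ SCyl t u) ∩ Avoid S' (ee T)) := by
          rw [hmerge, Set.inter_comm]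
      _ = μ (sec A v) * μ ((PathCyl T ee ∩ SCyl t u) ∩ Avoid (t : Set G) (ee T)) := by
          rw [measure_inter_congr_null hsub hdiffM hMnull]
      _ = μ (sec A v) * μ (SCyl t u ∩ pc ⟨T, e⟩) := by
          rw [hpceq]
          exact congrArg (μ (sec A v) * μ ·) (by ext f; simp only [Set.mem_inter_iff]; tauto)
  rw [hsum _ ((measurableSet_sec hAm v).inter (measurableSet_SCyl t u)),
    hsum _ (measurableSet_SCyl t u)]
  rw [ENNReal.tsum_mul_left.symm]
  exact tsum_congr hpiece

end Part2



/-- For a cycle-free CMT with the Liouville property, the connected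
components are indistinguishable by tail branch-properties. -/
theorem cmt_components_indistinguishable
    [Countable G] [MeasurableSpace G] [MeasurableSingletonClass G]
    (K : G → Measure G) (hK : ∀ x, IsProbabilityMeasure (K x)) (hcf : CycleFree K)
    (hLiou : LiouvilleProperty K)
    (μ : Measure (G → G)) [IsProbabilityMeasure μ] (hμ : IsCMTLaw K μ) :
    ∀ A : Set (G × (G → G)), IsTailBranchProperty A →
      (((Measure.count : Measure G).prod μ) A = 0 ∨
        ((Measure.count : Measure G).prod μ) Aᶜ = 0) ∧
      ((∀ᵐ f ∂μ, ∀ v : G, (v, f) ∈ A) ∨ (∀ᵐ f ∂μ, ∀ v : G, (v, f) ∉ A)) := by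
  intro A hA
  have hAm : MeasurableSet A := hA.1.1
  cases isEmpty_or_nonempty G with
  | inl hemp =>
      constructor
      · left
        have hAe : A = ∅ :=
          Set.eq_empty_iff_forall_notMem.mpr fun p _ => (IsEmpty.false p.1).elim
        rw [hAe]
        exact measure_empty
      · left
        exact Filter.Eventually.of_forall fun f v => (IsEmpty.false v).elim
  | inr hne =>
      obtain ⟨v₀⟩ := hne
      have hconst : ∀ x, μ (sec A x) = μ (sec A v₀) :=
        fun x => sec_const hK hcf hLiou hμ hA x v₀
      -- c = c²
      have hsq : μ (sec A v₀) = μ (sec A v₀) * μ (sec A v₀) := by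
        haveI : IsFiniteMeasure (μ (sec A v₀) • μ) := by
          constructor
          rw [Measure.smul_apply, smul_eq_mul]
          exact ENNReal.mul_lt_top (measure_lt_top μ _) (measure_lt_top μ _)
        have hext2 : μ.restrict (sec A v₀) = μ (sec A v₀) • μ := by
          apply ext_SCyl (ι := G)
          · intro t w
            rw [Measure.restrict_apply' (measurableSet_sec hAm v₀), Set.inter_comm,
              Measure.smul_apply, smul_eq_mul]
            exact main_indep hK hcf hLiou hμ hA v₀ t w
          · rw [Measure.restrict_apply' (measurableSet_sec hAm v₀),
              Measure.smul_apply, smul_eq_mul, measure_univ, mul_one, Set.univ_inter]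
        have := congrArg (fun ν : Measure (G → G) => ν (sec A v₀)) hext2
        simpa [Measure.restrict_apply' (measurableSet_sec hAm v₀),
          Measure.smul_apply, smul_eq_mul] using this
      have hc01 : μ (sec A v₀) = 0 ∨ μ (sec A v₀) = 1 := by
        rcases eq_or_ne (μ (sec A v₀)) 0 with h | h
        · exact Or.inl h
        · right
          have h1 : μ (sec A v₀) * 1 = μ (sec A v₀) * μ (sec A v₀) := by
            rw [mul_one]; exact hsq
          exact ((ENNReal.mul_right_inj h (measure_ne_top μ _)).mp h1).symm
      rcases hc01 with h | h
      · -- all sections null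
        have hnull : ∀ x, μ (sec A x) = 0 := fun x => (hconst x).trans h
        constructor
        · left
          rw [Measure.prod_apply hAm]
          have hz : ∀ x, μ (Prod.mk x ⁻¹' A) = 0 := fun x => hnull x
          simp only [hz, lintegral_zero]
        · right
          rw [MeasureTheory.ae_all_iff]
          intro v
          exact measure_eq_zero_iff_ae_notMem.mp (hnull v)
      · -- all sections full
        have hfull : ∀ x, μ ((sec A x)ᶜ) = 0 := fun x => by
          rw [measure_compl (measurableSet_sec hAm x) (measure_ne_top μ _),
            measure_univ, hconst x, h, tsub_self]
        constructor
        · right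
          rw [Measure.prod_apply hAm.compl]
          have hz : ∀ x, μ (Prod.mk x ⁻¹' Aᶜ) = 0 := fun x => hfull x
          simp only [hz, lintegral_zero]
        · left
          rw [MeasureTheory.ae_all_iff]
          intro v
          filter_upwards [measure_eq_zero_iff_ae_notMem.mp (hfull v)] with f hf
          simpa [sec] using hf

end CMTPaper
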